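/- arXiv:1302.1035 — 4 statements merged into one kernel-verified Lean document; each statement's English description precedes it below -/
import Mathlib

section
/- Let F be a finite field, n a natural number, and C a linear subspace of (Fin n → F). For v₁, v₂ : Fin n → F define the two-block CSS basis state Ψ_{v₁,v₂} : ((Fin n → F) × (Fin n → F)) → ℂ by Ψ_{v₁,v₂}(x, y) = ψ_{v₁}(x) · ψ_{v₂}(y), where ψ_v = (Fintype.card C : ℝ)^(-1/2) • ∑_{c ∈ C} e_{c+v}. Let U be the linear map on (((Fin n → F) × (Fin n → F)) → ℂ) induced by the basis permutation (x, y) ↦ (x, x + y) (the transversal CNOT). Then U Ψ_{v₁,v₂} = Ψ_{v₁, v₁+v₂}. -/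
open scoped Classical

/-- The standard basis vector `e_x` of `(Fin n → F) → ℂ` supported at `x`. -/
noncomputable def stdVec {F : Type*} [Field F] {n : ℕ} (x : Fin n → F) :
    (Fin n → F) → ℂ :=
  fun y => if y = x then 1 else 0

/-- The CSS basis state `ψ_v = |C|^(-1/2) ∑_{c ∈ C} e_{c+v}`. -/
noncomputable def psi {F : Type*} [Field F] [Fintype F] {n : ℕ}
    (C : Submodule F (Fin n → F)) (v : Fin n → F) : (Fin n → F) → ℂ :=
  ((Fintype.card C : ℝ) ^ (-(1 : ℝ)/2)) • ∑ c : C, stdVec ((c : Fin n → F) + v)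

/-- The standard basis vector of the two-block space, supported at `p`. -/
noncomputable def stdVec2 {F : Type*} [Field F] {n : ℕ}
    (p : (Fin n → F) × (Fin n → F)) : ((Fin n → F) × (Fin n → F)) → ℂ :=
  fun q => if q = p then 1 else 0

/-- The two-block CSS basis state `Ψ_{v₁,v₂}(x, y) = ψ_{v₁}(x) · ψ_{v₂}(y)`. -/
noncomputable def psi2 {F : Type*} [Field F] [Fintype F] {n : ℕ}
    (C : Submodule F (Fin n → F)) (v₁ v₂ : Fin n → F) :
    ((Fin n → F) × (Fin n → F)) → ℂ :=
  fun p => psi C v₁ p.1 * psi C v₂ p.2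

lemma psi2_eq {F : Type*} [Field F] [Fintype F] {n : ℕ}
    (C : Submodule F (Fin n → F)) (v₁ v₂ : Fin n → F) :
    psi2 C v₁ v₂ = (((Fintype.card C : ℝ) ^ (-(1 : ℝ)/2) *
      (Fintype.card C : ℝ) ^ (-(1 : ℝ)/2) : ℝ)) •
      ∑ c : C, ∑ d : C, stdVec2 ((c : Fin n → F) + v₁, (d : Fin n → F) + v₂) := by
  funext p
  simp only [psi2, psi, stdVec, stdVec2, Pi.smul_apply, Finset.sum_apply,
    smul_eq_mul, Complex.real_smul, Prod.ext_iff]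
  push_cast
  rw [mul_mul_mul_comm, Finset.sum_mul_sum]
  congr 1
  apply Finset.sum_congr rfl; intro c _
  apply Finset.sum_congr rfl; intro d _
  rw [ite_and, ite_mul, zero_mul, one_mul]

/-- The transversal CNOT, i.e. the linear map permuting the standard basis by
`e_{(x,y)} ↦ e_{(x,x+y)}`, acts on two-block CSS basis states by
`U Ψ_{v₁,v₂} = Ψ_{v₁,v₁+v₂}`. -/
theorem transversal_CNOT_on_CSS_states
    {F : Type*} [Field F] [Fintype F] {n : ℕ}
    (C : Submodule F (Fin n → F))
    (U : (((Fin n → F) × (Fin n → F)) → ℂ) →ₗ[ℂ] (((Fin n → F) × (Fin n → F)) → ℂ))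
    (hU : ∀ p : (Fin n → F) × (Fin n → F), U (stdVec2 p) = stdVec2 (p.1, p.1 + p.2))
    (v₁ v₂ : Fin n → F) :
    U (psi2 C v₁ v₂) = psi2 C v₁ (v₁ + v₂) := by
  rw [psi2_eq, psi2_eq]
  rw [LinearMap.map_smul_of_tower, map_sum]
  congr 1
  apply Finset.sum_congr rfl
  intro c _
  rw [map_sum]
  rw [← Equiv.sum_comp (Equiv.addLeft c) (fun d : C => stdVec2 ((c:Fin n → F) + v₁, (d:Fin n → F) + (v₁ + v₂)))]
  apply Finset.sum_congr rfl
  intro d _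
  rw [hU]
  simp only [Equiv.coe_addLeft]
  push_cast
  abel_nf
end

section
/- Let F be a field, k a natural number, and H a subgroup of GL k F (invertible k×k matrices over F). Let G₁₂ be the subgroup of GL (2k) F generated by the block matrices fromBlocks 1 0 1 1 and fromBlocks 1 1 0 1 together with all block-diagonal matrices fromBlocks S 0 0 T for S, T ∈ H. Then for every k×k matrix A lying in the additive subgroup of matrices generated by ℤ-linear combinations of the elements of H (i.e., A = ∑_π α_π M_π with α_π ∈ ℤ and M_π ∈ H), both fromBlocks 1 A 0 1 and fromBlocks 1 0 A 1 belong to G₁₂. -/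
open Matrix

section Aux

variable {F : Type*} [Field F] {k : ℕ}

/-- The unit `[[1,A],[0,1]]`. -/
def upperU (A : Matrix (Fin k) (Fin k) F) :
    Matrix.GeneralLinearGroup (Fin k ⊕ Fin k) F where
  val := Matrix.fromBlocks 1 A 0 1
  inv := Matrix.fromBlocks 1 (-A) 0 1
  val_inv := by
    rw [Matrix.fromBlocks_multiply]
    simp [← Matrix.fromBlocks_one]
  inv_val := by
    rw [Matrix.fromBlocks_multiply]
    simp [← Matrix.fromBlocks_one]

/-- The unit `[[1,0],[A,1]]`. -/
def lowerU (A : Matrix (Fin k) (Fin k) F) :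
    Matrix.GeneralLinearGroup (Fin k ⊕ Fin k) F where
  val := Matrix.fromBlocks 1 0 A 1
  inv := Matrix.fromBlocks 1 0 (-A) 1
  val_inv := by
    rw [Matrix.fromBlocks_multiply]
    simp [← Matrix.fromBlocks_one]
  inv_val := by
    rw [Matrix.fromBlocks_multiply]
    simp [← Matrix.fromBlocks_one]

/-- The unit `[[S,0],[0,T]]` for `S T : GL k F`. -/
def diagU (S T : Matrix.GeneralLinearGroup (Fin k) F) :
    Matrix.GeneralLinearGroup (Fin k ⊕ Fin k) F where
  val := Matrix.fromBlocks S.val 0 0 T.val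
  inv := Matrix.fromBlocks S.inv 0 0 T.inv
  val_inv := by
    rw [Matrix.fromBlocks_multiply]
    simp only [Matrix.mul_zero, Matrix.zero_mul, mul_zero, zero_mul, add_zero, zero_add,
      Units.val_inv, Units.inv_val, ← Matrix.fromBlocks_one]
  inv_val := by
    rw [Matrix.fromBlocks_multiply]
    simp only [Matrix.mul_zero, Matrix.zero_mul, mul_zero, zero_mul, add_zero, zero_add,
      Units.val_inv, Units.inv_val, ← Matrix.fromBlocks_one]

end Aux

/-- If `G₁₂` is generated by the transversal CNOTs `[[1,0],[1,1]]`, `[[1,1],[0,1]]`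
and the block-diagonal matrices `[[S,0],[0,T]]` with `S, T ∈ H`, then for every
matrix `A` in the additive (ℤ-linear) span of `H`, both `[[1,A],[0,1]]` and
`[[1,0],[A,1]]` lie in `G₁₂`. -/
theorem blockTriangular_mem_of_mem_addClosure
    {F : Type*} [Field F] {k : ℕ}
    (H : Subgroup (Matrix.GeneralLinearGroup (Fin k) F))
    (G₁₂ : Subgroup (Matrix.GeneralLinearGroup (Fin k ⊕ Fin k) F))
    (hG : G₁₂ = Subgroup.closure
      {g : Matrix.GeneralLinearGroup (Fin k ⊕ Fin k) F |
        ((g : Matrix (Fin k ⊕ Fin k) (Fin k ⊕ Fin k) F) =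
          Matrix.fromBlocks 1 0 1 (1 : Matrix (Fin k) (Fin k) F)) ∨
        ((g : Matrix (Fin k ⊕ Fin k) (Fin k ⊕ Fin k) F) =
          Matrix.fromBlocks 1 (1 : Matrix (Fin k) (Fin k) F) 0 1) ∨
        (∃ S ∈ H, ∃ T ∈ H,
          (g : Matrix (Fin k ⊕ Fin k) (Fin k ⊕ Fin k) F) =
            Matrix.fromBlocks (S : Matrix (Fin k) (Fin k) F) 0 0
              (T : Matrix (Fin k) (Fin k) F))})
    (A : Matrix (Fin k) (Fin k) F)
    (hA : A ∈ AddSubgroup.closure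
      ((fun h : Matrix.GeneralLinearGroup (Fin k) F =>
        (h : Matrix (Fin k) (Fin k) F)) '' (H : Set _))) :
    (∃ g ∈ G₁₂, (g : Matrix (Fin k ⊕ Fin k) (Fin k ⊕ Fin k) F) =
        Matrix.fromBlocks 1 A 0 1) ∧
    (∃ g ∈ G₁₂, (g : Matrix (Fin k ⊕ Fin k) (Fin k ⊕ Fin k) F) =
        Matrix.fromBlocks 1 0 A 1) := by
  subst hG
  suffices h : upperU A ∈ Subgroup.closure _ ∧ lowerU A ∈ Subgroup.closure _ from
    ⟨⟨upperU A, h.1, rfl⟩, ⟨lowerU A, h.2, rfl⟩⟩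
  induction hA using AddSubgroup.closure_induction with
  | mem x hx =>
    obtain ⟨M, hM, rfl⟩ := hx
    constructor
    · have : upperU (M : Matrix (Fin k) (Fin k) F) =
        diagU M 1 * upperU 1 * (diagU M 1)⁻¹ := by
        ext1
        show Matrix.fromBlocks 1 M.val 0 1 = Matrix.fromBlocks M.val 0 0 1 *
          Matrix.fromBlocks 1 1 0 1 * Matrix.fromBlocks M.inv 0 0 1
        rw [Matrix.fromBlocks_multiply, Matrix.fromBlocks_multiply]
        simp only [mul_zero, zero_mul, add_zero, zero_add, one_mul, mul_one,
          Units.val_inv]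
      rw [this]
      refine mul_mem (mul_mem ?_ ?_) (inv_mem ?_) <;>
        apply Subgroup.subset_closure
      · exact Or.inr (Or.inr ⟨M, hM, 1, one_mem H, by simp [diagU]⟩)
      · exact Or.inr (Or.inl rfl)
      · exact Or.inr (Or.inr ⟨M, hM, 1, one_mem H, by simp [diagU]⟩)
    · have : lowerU (M : Matrix (Fin k) (Fin k) F) =
        diagU 1 M * lowerU 1 * (diagU 1 M)⁻¹ := by
        ext1
        show Matrix.fromBlocks 1 0 M.val 1 = Matrix.fromBlocks 1 0 0 M.val *
          Matrix.fromBlocks 1 0 1 1 * Matrix.fromBlocks 1 0 0 M.inv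
        rw [Matrix.fromBlocks_multiply, Matrix.fromBlocks_multiply]
        simp only [mul_zero, zero_mul, add_zero, zero_add, one_mul, mul_one,
          Units.val_inv]
      rw [this]
      refine mul_mem (mul_mem ?_ ?_) (inv_mem ?_) <;>
        apply Subgroup.subset_closure
      · exact Or.inr (Or.inr ⟨1, one_mem H, M, hM, by simp [diagU]⟩)
      · exact Or.inl rfl
      · exact Or.inr (Or.inr ⟨1, one_mem H, M, hM, by simp [diagU]⟩)
  | zero =>
    have h1 : upperU (0 : Matrix (Fin k) (Fin k) F) = 1 := by
      ext1; simp [upperU, ← Matrix.fromBlocks_one]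
    have h2 : lowerU (0 : Matrix (Fin k) (Fin k) F) = 1 := by
      ext1; simp [lowerU, ← Matrix.fromBlocks_one]
    rw [h1, h2]
    exact ⟨one_mem _, one_mem _⟩
  | add x y hx hy ihx ihy =>
    have h1 : upperU (x + y) = upperU x * upperU y := by
      ext1
      simp [upperU, Matrix.fromBlocks_multiply, add_comm]
    have h2 : lowerU (x + y) = lowerU x * lowerU y := by
      ext1
      simp [lowerU, Matrix.fromBlocks_multiply, add_comm]
    rw [h1, h2]
    exact ⟨mul_mem ihx.1 ihy.1, mul_mem ihx.2 ihy.2⟩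
  | neg x hx ihx =>
    have h1 : upperU (-x) = (upperU x)⁻¹ := by
      ext1; rfl
    have h2 : lowerU (-x) = (lowerU x)⁻¹ := by
      ext1; rfl
    rw [h1, h2]
    exact ⟨inv_mem ihx.1, inv_mem ihx.2⟩
end

section
/- Let F be a field, n a natural number, i, j, k ∈ Fin n with i ≠ k, and α, β ∈ F. Let E_{a,b} denote the n×n matrix with a single 1 in row a, column b (Matrix.stdBasisMatrix). Set M₁ = fromBlocks 1 (α • E_{i,j}) 0 1, M₁' = fromBlocks 1 (-α • E_{i,j}) 0 1, M₂ = fromBlocks 1 0 (β • E_{j,k}) 1, M₂' = fromBlocks 1 0 (-β • E_{j,k}) 1 (so M₁' = M₁⁻¹ and M₂' = M₂⁻¹). Then M₂' * M₁ * M₂ * M₁' = fromBlocks (1 + (α*β) • E_{i,k}) 0 0 1. -/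
open Matrix

/-- Commutator identity for block transvections: with `E_{a,b}` the matrix units,
`M₂⁻¹ * M₁ * M₂ * M₁⁻¹ = [[1 + αβ E_{i,k}, 0],[0, 1]]` for `i ≠ k`. -/
theorem transvection_commutator_identity
    {F : Type*} [Field F] {n : ℕ} (i j k : Fin n) (hik : i ≠ k) (α β : F) :
    (Matrix.fromBlocks 1 0 ((-β) • Matrix.single j k (1 : F)) 1) *
        (Matrix.fromBlocks 1 (α • Matrix.single i j (1 : F)) 0 1) *
        (Matrix.fromBlocks 1 0 (β • Matrix.single j k (1 : F)) 1) *
        (Matrix.fromBlocks 1 ((-α) • Matrix.single i j (1 : F)) 0 1) =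
      Matrix.fromBlocks (1 + (α * β) • Matrix.single i k (1 : F)) 0 0 1 ∧
    (Matrix.fromBlocks 1 ((-α) • Matrix.single i j (1 : F)) 0 1) *
        (Matrix.fromBlocks 1 (α • Matrix.single i j (1 : F)) 0 1) =
      (1 : Matrix ((Fin n) ⊕ (Fin n)) ((Fin n) ⊕ (Fin n)) F) ∧
    (Matrix.fromBlocks 1 0 ((-β) • Matrix.single j k (1 : F)) 1) *
        (Matrix.fromBlocks 1 0 (β • Matrix.single j k (1 : F)) 1) =
      (1 : Matrix ((Fin n) ⊕ (Fin n)) ((Fin n) ⊕ (Fin n)) F) := by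
  have hz : ∀ a b : F, Matrix.single j k b * Matrix.single i j a = 0 :=
    fun a b => Matrix.single_mul_single_of_ne (c := b) j k i hik.symm a
  have hm : ∀ a b : F, Matrix.single i j a * Matrix.single j k b =
      Matrix.single i k (a * b) :=
    fun a b => Matrix.single_mul_single_same (c := a) i j k b
  have hz2 : ∀ a b : F, Matrix.single i k b * Matrix.single i j a = 0 :=
    fun a b => Matrix.single_mul_single_of_ne (c := b) i k i hik.symm a
  refine ⟨?_, ?_, ?_⟩ <;>
    simp [Matrix.fromBlocks_multiply, ← Matrix.fromBlocks_one, Matrix.smul_mul, Matrix.mul_smul,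
      hz, hm, hz2, add_mul, mul_add, smul_smul, mul_comm, add_assoc]
end

section
/- Let G be the 7 × 22 matrix over ZMod 2 whose rows are: (1,0,0,0,1,0,0,0,0,1,1,0,0,0,1,0,1,0,1,0,1,0), (0,1,0,0,1,0,0,0,0,1,1,0,1,0,0,1,0,1,0,1,1,1), (0,0,1,0,1,0,0,0,0,1,0,1,0,0,1,1,0,1,1,0,0,0), (0,0,0,1,0,0,0,1,0,0,1,0,0,0,0,1,1,0,1,0,1,1), (0,0,0,0,0,1,0,1,0,1,0,1,1,1,1,1,1,0,0,0,1,0), (0,0,0,0,0,0,1,1,0,0,1,0,0,1,1,0,1,0,1,1,0,0), (0,0,0,0,0,0,0,0,1,1,1,1,1,1,1,1,1,1,1,1,1,1). Then G * Gᵀ = 0 over ZMod 2; equivalently, the linear code C ⊆ (Fin 22 → ZMod 2) spanned by the rows of G is self-orthogonal: C ≤ C⊥. -/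
/-- The generator matrix of the classical self-orthogonal `[22,7,8]` code underlying
the CSS code `[[22,8,4]]`. -/
def G2278 : Matrix (Fin 7) (Fin 22) (ZMod 2) :=
  !![1,0,0,0,1,0,0,0,0,1,1,0,0,0,1,0,1,0,1,0,1,0;
     0,1,0,0,1,0,0,0,0,1,1,0,1,0,0,1,0,1,0,1,1,1;
     0,0,1,0,1,0,0,0,0,1,0,1,0,0,1,1,0,1,1,0,0,0;
     0,0,0,1,0,0,0,1,0,0,1,0,0,0,0,1,1,0,1,0,1,1;
     0,0,0,0,0,1,0,1,0,1,0,1,1,1,1,1,1,0,0,0,1,0;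
     0,0,0,0,0,0,1,1,0,0,1,0,0,1,1,0,1,0,1,1,0,0;
     0,0,0,0,0,0,0,0,1,1,1,1,1,1,1,1,1,1,1,1,1,1]

/-- The rows of `G2278` are pairwise orthogonal and self-orthogonal (`G * Gᵀ = 0`);
equivalently, the code `C` spanned by the rows of `G` is self-orthogonal: `C ≤ C⊥`. -/
theorem code_22_7_8_self_orthogonal :
    G2278 * G2278.transpose = 0 ∧
    (∀ x ∈ Submodule.span (ZMod 2) (Set.range fun i => G2278 i),
      ∀ c ∈ Submodule.span (ZMod 2) (Set.range fun i => G2278 i),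
        ∑ j, x j * c j = 0) := by
  have hGG : G2278 * G2278.transpose = 0 := by decide
  refine ⟨hGG, ?_⟩
  have hrow : ∀ i j : Fin 7, ∑ k, G2278 i k * G2278 j k = 0 := by
    intro i j
    have := congrFun (congrFun hGG i) j
    simpa [Matrix.mul_apply, Matrix.transpose_apply] using this
  have key : ∀ i : Fin 7, ∀ c ∈ Submodule.span (ZMod 2) (Set.range fun i => G2278 i),
      ∑ j, G2278 i j * c j = 0 := by
    intro i c hc
    induction hc using Submodule.span_induction with
    | mem c h => obtain ⟨k, rfl⟩ := h; exact hrow i k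
    | zero => simp
    | add a b _ _ ha hb =>
        simp only [Pi.add_apply, mul_add, Finset.sum_add_distrib, ha, hb, add_zero]
    | smul r a _ ha =>
        simp only [Pi.smul_apply, smul_eq_mul, mul_left_comm, ← Finset.mul_sum, ha, mul_zero]
  intro x hx c hc
  induction hx using Submodule.span_induction with
  | mem a h => obtain ⟨i, rfl⟩ := h; exact key i c hc
  | zero => simp
  | add a b _ _ ha hb =>
      simp only [Pi.add_apply, add_mul, Finset.sum_add_distrib, ha, hb, add_zero]
  | smul r a _ ha =>
      simp only [Pi.smul_apply, smul_eq_mul, mul_assoc, ← Finset.mul_sum, ha, mul_zero]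
end
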